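/- For every natural number n ≥ 1, the metric space K_n has the sequential strong long trapezoid property (seq-SLTP). -/

import Mathlib

/-- The metric space `Kn n`: all sequences with terms in `{0, 1, …, n}`, viewed as a metric
subspace of `ℓ∞` (bounded functions `ℕ → ℝ` with the supremum metric). -/
def Kn (n : ℕ) : Type :=
  {x : BoundedContinuousFunction ℕ ℝ // ∀ j : ℕ, ∃ k : ℕ, k ≤ n ∧ x j = k}

noncomputable instance (n : ℕ) : MetricSpace (Kn n) := Subtype.metricSpace

/-- A metric space `M` has the *sequential strong long trapezoid property* (seq-SLTP). -/
def SeqSLTP (M : Type*) [MetricSpace M] : Prop :=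
  ∀ ε : ℝ, 0 < ε → ∃ A : ℕ → Set M,
    (Pairwise fun m k => Disjoint (A m) (A k)) ∧
    ∀ m : ℕ, ∃ u ∈ A m, ∃ v ∈ A m, u ≠ v ∧
      (∀ x ∉ A m, ∀ y ∉ A m,
        (1 - ε) * (dist x y + dist u v) ≤ dist x u + dist y v) ∧
      (∀ x ∉ A m, ∀ y ∉ A m, ∀ z ∉ A m, ∀ w ∉ A m,
        (1 - ε) * (dist x y + dist z w + 2 * dist u v) ≤
          dist x u + dist y u + dist z v + dist w v)

/-! ### Auxiliary constructions and lemmas -/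

/-- Build an element of `Kn n` from a natural-valued sequence bounded by `n`. -/
def KnMk (n : ℕ) (f : ℕ → ℕ) (hf : ∀ j, f j ≤ n) : Kn n :=
  ⟨BoundedContinuousFunction.mkOfBound ⟨fun j => (f j : ℝ), continuous_of_discreteTopology⟩ n
    (by
      intro a b
      simp only [ContinuousMap.coe_mk]
      rw [Real.dist_eq, abs_le]
      have h1 : (f a : ℝ) ≤ n := by exact_mod_cast hf a
      have h2 : (f b : ℝ) ≤ n := by exact_mod_cast hf b
      have h3 : (0:ℝ) ≤ (f a : ℝ) := by positivity
      have h4 : (0:ℝ) ≤ (f b : ℝ) := by positivity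
      constructor <;> linarith),
   fun j => ⟨f j, hf j, rfl⟩⟩

lemma KnMk_coord (n : ℕ) (f : ℕ → ℕ) (hf : ∀ j, f j ≤ n) (j : ℕ) :
    (KnMk n f hf).1 j = f j := rfl

lemma kn_nonneg {n : ℕ} (x : Kn n) (c : ℕ) : 0 ≤ x.1 c := by
  obtain ⟨k, _, e⟩ := x.2 c
  rw [e]; positivity

lemma kn_le {n : ℕ} (x : Kn n) (c : ℕ) : x.1 c ≤ n := by
  obtain ⟨k, hk, e⟩ := x.2 c
  rw [e]; exact_mod_cast hk

lemma kn_ge_one {n : ℕ} (x : Kn n) (c : ℕ) (h : x.1 c ≠ 0) : 1 ≤ x.1 c := by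
  obtain ⟨k, _, e⟩ := x.2 c
  rw [e] at h ⊢
  have hk : k ≠ 0 := by exact_mod_cast h
  exact_mod_cast Nat.one_le_iff_ne_zero.mpr hk

lemma kn_ge_two {n : ℕ} (x : Kn n) (c : ℕ) (h1 : 1 ≤ x.1 c) (h2 : x.1 c ≠ 1) :
    2 ≤ x.1 c := by
  obtain ⟨k, _, e⟩ := x.2 c
  rw [e] at h1 h2 ⊢
  have hk1 : 1 ≤ k := by exact_mod_cast h1
  have hk2 : k ≠ 1 := by exact_mod_cast h2
  have : 2 ≤ k := by omega
  exact_mod_cast this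

lemma kn_le_one {n : ℕ} (x : Kn n) (c : ℕ) (h : x.1 c < 2) : x.1 c ≤ 1 := by
  obtain ⟨k, _, e⟩ := x.2 c
  rw [e] at h ⊢
  have hk : k < 2 := by exact_mod_cast h
  have : k ≤ 1 := by omega
  exact_mod_cast this

lemma kn_abs_le_dist {n : ℕ} (x y : Kn n) (c : ℕ) : |x.1 c - y.1 c| ≤ dist x y := by
  rw [show dist x y = dist x.1 y.1 from rfl, ← Real.dist_eq]
  exact BoundedContinuousFunction.dist_coe_le_dist c

lemma kn_dist_le {n : ℕ} {C : ℝ} (hC : 0 ≤ C) (x y : Kn n)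
    (h : ∀ c, |x.1 c - y.1 c| ≤ C) : dist x y ≤ C := by
  rw [show dist x y = dist x.1 y.1 from rfl]
  exact (BoundedContinuousFunction.dist_le hC).2 (fun c => by rw [Real.dist_eq]; exact h c)

lemma kn_dist_le_n {n : ℕ} (x y : Kn n) : dist x y ≤ n := by
  refine kn_dist_le (by positivity) x y (fun c => ?_)
  have := kn_nonneg x c; have := kn_le x c
  have := kn_nonneg y c; have := kn_le y c
  rw [abs_sub_le_iff]; constructor <;> linarith

/-- The marker `u` for block `m` : `0` at coordinate `2m`, `n` elsewhere. -/
def KnU (n m : ℕ) : Kn n :=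
  KnMk n (fun j => if j = 2*m then 0 else n) (by intro j; split <;> omega)

/-- The marker `v` for block `m` : `0` at `2m`, `n-1` at `2m+1`, `n` elsewhere. -/
def KnV (n m : ℕ) : Kn n :=
  KnMk n (fun j => if j = 2*m then 0 else if j = 2*m+1 then n-1 else n)
    (by intro j; split
        · omega
        · split <;> omega)

lemma KnU_p (n m : ℕ) : (KnU n m).1 (2*m) = 0 := by
  show ((if 2*m = 2*m then 0 else n : ℕ) : ℝ) = 0
  simp

lemma KnU_off (n m : ℕ) (c : ℕ) (h : c ≠ 2*m) : (KnU n m).1 c = n := by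
  show ((if c = 2*m then 0 else n : ℕ) : ℝ) = n
  rw [if_neg h]

lemma KnV_p (n m : ℕ) : (KnV n m).1 (2*m) = 0 := by
  show ((if 2*m = 2*m then 0 else if 2*m = 2*m+1 then n-1 else n : ℕ) : ℝ) = 0
  simp

lemma KnV_q (n m : ℕ) (hn : 1 ≤ n) : (KnV n m).1 (2*m+1) = (n : ℝ) - 1 := by
  show ((if 2*m+1 = 2*m then 0 else if 2*m+1 = 2*m+1 then n-1 else n : ℕ) : ℝ) = (n:ℝ) - 1
  rw [if_neg (by omega), if_pos rfl, Nat.cast_sub hn, Nat.cast_one]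

lemma KnV_off (n m : ℕ) (c : ℕ) (h1 : c ≠ 2*m) (h2 : c ≠ 2*m+1) : (KnV n m).1 c = n := by
  show ((if c = 2*m then 0 else if c = 2*m+1 then n-1 else n : ℕ) : ℝ) = n
  rw [if_neg h1, if_neg h2]

/-- The set `A m` : tagged points (a zero in block `m`, everything off the block `≥ 1`),
together with the special cluster `W` (`1` at `2m`, everything else `≥ 2`). -/
def KnA (n m : ℕ) : Set (Kn n) :=
  {x | ((x.1 (2*m) = 0 ∨ x.1 (2*m+1) = 0) ∧ ∀ c, c ≠ 2*m → c ≠ 2*m+1 → 1 ≤ x.1 c) ∨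
       (x.1 (2*m) = 1 ∧ ∀ c, c ≠ 2*m → 2 ≤ x.1 c)}

def KnStrong (n m : ℕ) (x : Kn n) : Prop :=
  x.1 (2*m) = n ∨ ∃ c, c ≠ 2*m ∧ c ≠ 2*m+1 ∧ x.1 c = 0

def KnWeak (n m : ℕ) (x : Kn n) : Prop :=
  1 ≤ x.1 (2*m) ∧ 1 ≤ x.1 (2*m+1) ∧ (∀ c, c ≠ 2*m → c ≠ 2*m+1 → 1 ≤ x.1 c) ∧
    (2 ≤ x.1 (2*m) ∨ ∃ c, c ≠ 2*m ∧ x.1 c ≤ 1)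

lemma kn_outside {n m : ℕ} {x : Kn n} (hx : x ∉ KnA n m) :
    KnStrong n m x ∨ KnWeak n m x := by
  by_cases hs : KnStrong n m x
  · exact Or.inl hs
  right
  rw [KnStrong] at hs; push_neg at hs
  obtain ⟨hsp, hsoff⟩ := hs
  have hoff : ∀ c, c ≠ 2*m → c ≠ 2*m+1 → 1 ≤ x.1 c :=
    fun c h1 h2 => kn_ge_one x c (hsoff c h1 h2)
  simp only [KnA, Set.mem_setOf_eq] at hx
  push_neg at hx
  obtain ⟨htag, hW⟩ := hx
  have hz : ¬(x.1 (2*m) = 0 ∨ x.1 (2*m+1) = 0) := by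
    intro h
    obtain ⟨c, h1, h2, hlt⟩ := htag h
    linarith [hoff c h1 h2]
  push_neg at hz
  have hp1 : 1 ≤ x.1 (2*m) := kn_ge_one x _ hz.1
  have hq1 : 1 ≤ x.1 (2*m+1) := kn_ge_one x _ hz.2
  refine ⟨hp1, hq1, hoff, ?_⟩
  by_cases hxp : x.1 (2*m) = 1
  · right
    obtain ⟨c, hc, hlt⟩ := hW hxp
    exact ⟨c, hc, kn_le_one x c hlt⟩
  · exact Or.inl (kn_ge_two x _ hp1 hxp)

section Core

variable {n m : ℕ}

/-- A strong point is at distance at least `n` from any marker. -/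
lemma kn_n_le_dist (x w : Kn n) (hwp : w.1 (2*m) = 0)
    (hwoff : ∀ c, c ≠ 2*m → c ≠ 2*m+1 → w.1 c = (n:ℝ))
    (hs : KnStrong n m x) : (n : ℝ) ≤ dist x w := by
  rcases hs with hp | ⟨c, h1, h2, h0⟩
  · have := kn_abs_le_dist x w (2*m)
    rw [hp, hwp, sub_zero, abs_of_nonneg (by positivity)] at this
    exact this
  · have := kn_abs_le_dist x w c
    rw [h0, hwoff c h1 h2, zero_sub, abs_neg, abs_of_nonneg (by positivity)] at this
    exact this

lemma kn_one_le_dist (hn : 1 ≤ n) (x w : Kn n) (hwp : w.1 (2*m) = 0)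
    (hwoff : ∀ c, c ≠ 2*m → c ≠ 2*m+1 → w.1 c = (n:ℝ))
    (hx : KnStrong n m x ∨ KnWeak n m x) : 1 ≤ dist x w := by
  have hn' : (1:ℝ) ≤ n := by exact_mod_cast hn
  rcases hx with hs | hw
  · linarith [kn_n_le_dist (m := m) x w hwp hwoff hs]
  · have := kn_abs_le_dist x w (2*m)
    rw [hwp, sub_zero, abs_of_nonneg (kn_nonneg x _)] at this
    linarith [hw.1]

/-- The key estimate at the coordinate `2m+1` in the weak case. -/
lemma kn_qbound (x y w₁ w₂ : Kn n)
    (h₁p : w₁.1 (2*m) = 0)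
    (h₁off : ∀ c, c ≠ 2*m → c ≠ 2*m+1 → w₁.1 c = (n:ℝ))
    (h₂p : w₂.1 (2*m) = 0)
    (h₂q : (n:ℝ) - 1 ≤ w₂.1 (2*m+1))
    (hwx : KnWeak n m x) (hwy : KnWeak n m y)
    (hgt : y.1 (2*m+1) < x.1 (2*m+1)) :
    x.1 (2*m+1) - y.1 (2*m+1) + 1 ≤ dist x w₁ + dist y w₂ := by
  have hxq_le : x.1 (2*m+1) ≤ n := kn_le x _
  have hD1p : x.1 (2*m) ≤ dist x w₁ := by
    have := kn_abs_le_dist x w₁ (2*m)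
    rwa [h₁p, sub_zero, abs_of_nonneg (kn_nonneg x _)] at this
  have hD2p : y.1 (2*m) ≤ dist y w₂ := by
    have := kn_abs_le_dist y w₂ (2*m)
    rwa [h₂p, sub_zero, abs_of_nonneg (kn_nonneg y _)] at this
  by_cases hc : (n:ℝ) ≤ y.1 (2*m+1) + 1
  · -- the difference is at most 1
    linarith [hwx.1, hwy.1]
  · push_neg at hc
    -- y_q ≤ n - 2 (as integers), hence n ≥ 3
    obtain ⟨k2, hk2n, e2⟩ := y.2 (2*m+1)
    have hk2ge1 : (1:ℝ) ≤ k2 := by rw [← e2]; exact hwy.2.1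
    have hk2ge1' : 1 ≤ k2 := by exact_mod_cast hk2ge1
    have hk2lt' : k2 + 1 < n := by
      rw [e2] at hc
      exact_mod_cast hc
    have hn3 : (3:ℝ) ≤ n := by
      have : 3 ≤ n := by omega
      exact_mod_cast this
    -- lower bound on dist y w₂ via the q coordinate
    have hD2q : (n:ℝ) - 1 - y.1 (2*m+1) ≤ dist y w₂ := by
      have h2 : w₂.1 (2*m+1) - y.1 (2*m+1) ≤ dist y w₂ :=
        le_trans (by rw [abs_sub_comm]; exact le_abs_self _) (kn_abs_le_dist y w₂ (2*m+1))
      linarith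
    -- dist x w₁ ≥ 2
    have hD1 : (2:ℝ) ≤ dist x w₁ := by
      rcases hwx.2.2.2 with h2p | ⟨c, hc2m, hcle⟩
      · linarith
      · by_cases hcq : c = 2*m+1
        · -- impossible: x_q ≥ y_q + 1 ≥ 2 but x_c ≤ 1
          exfalso
          subst hcq
          obtain ⟨k1, hk1n, e1⟩ := x.2 (2*m+1)
          have hgt' : (k2:ℝ) < k1 := by rw [← e1, ← e2]; exact hgt
          have : k2 < k1 := by exact_mod_cast hgt'
          have h2k1 : (2:ℝ) ≤ k1 := by exact_mod_cast (by omega : 2 ≤ k1)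
          rw [e1] at hcle; linarith
        · have h2 : w₁.1 c - x.1 c ≤ dist x w₁ :=
            le_trans (by rw [abs_sub_comm]; exact le_abs_self _) (kn_abs_le_dist x w₁ c)
          rw [h₁off c hc2m hcq] at h2
          linarith
    linarith

/-- Core exact inequality: for `x, y` outside `A m` and markers `w₁, w₂ ∈ {u, v}`,
`d(x,y) + 1 ≤ d(x,w₁) + d(y,w₂)`. -/
lemma kn_core (hn : 1 ≤ n) (w₁ w₂ x y : Kn n)
    (h₁p : w₁.1 (2*m) = 0)
    (h₁off : ∀ c, c ≠ 2*m → c ≠ 2*m+1 → w₁.1 c = (n:ℝ))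
    (h₂p : w₂.1 (2*m) = 0)
    (h₂off : ∀ c, c ≠ 2*m → c ≠ 2*m+1 → w₂.1 c = (n:ℝ))
    (h₂q : (n:ℝ) - 1 ≤ w₂.1 (2*m+1))
    (h₁q : (n:ℝ) - 1 ≤ w₁.1 (2*m+1))
    (hx : KnStrong n m x ∨ KnWeak n m x) (hy : KnStrong n m y ∨ KnWeak n m y) :
    dist x y + 1 ≤ dist x w₁ + dist y w₂ := by
  rcases hx with hsx | hwx
  · have h1 := kn_n_le_dist (m := m) x w₁ h₁p h₁off hsx
    have h2 := kn_one_le_dist (m := m) hn y w₂ h₂p h₂off hy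
    have h3 := kn_dist_le_n x y
    linarith
  rcases hy with hsy | hwy
  · have h1 := kn_n_le_dist (m := m) y w₂ h₂p h₂off hsy
    have h2 := kn_one_le_dist (m := m) hn x w₁ h₁p h₁off (Or.inr hwx)
    have h3 := kn_dist_le_n x y
    linarith
  -- both weak
  have hD1 : 1 ≤ dist x w₁ := kn_one_le_dist (m := m) hn x w₁ h₁p h₁off (Or.inr hwx)
  have hD2 : 1 ≤ dist y w₂ := kn_one_le_dist (m := m) hn y w₂ h₂p h₂off (Or.inr hwy)
  have key : dist x y ≤ dist x w₁ + dist y w₂ - 1 := by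
    refine kn_dist_le (by linarith) x y (fun c => ?_)
    by_cases hcp : c = 2*m
    · subst hcp
      have b1 : x.1 (2*m) ≤ dist x w₁ := by
        have := kn_abs_le_dist x w₁ (2*m)
        rwa [h₁p, sub_zero, abs_of_nonneg (kn_nonneg x _)] at this
      have b2 : y.1 (2*m) ≤ dist y w₂ := by
        have := kn_abs_le_dist y w₂ (2*m)
        rwa [h₂p, sub_zero, abs_of_nonneg (kn_nonneg y _)] at this
      rw [abs_sub_le_iff]
      constructor <;> linarith [hwx.1, hwy.1]
    by_cases hcq : c = 2*m+1
    · subst hcq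
      rcases lt_trichotomy (x.1 (2*m+1)) (y.1 (2*m+1)) with hlt | heq | hgt
      · have := kn_qbound (m := m) y x w₂ w₁ h₂p h₂off h₁p h₁q hwy hwx hlt
        rw [abs_sub_le_iff]
        constructor <;> linarith
      · rw [heq, sub_self, abs_zero]; linarith
      · have := kn_qbound (m := m) x y w₁ w₂ h₁p h₁off h₂p h₂q hwx hwy hgt
        rw [abs_sub_le_iff]
        constructor <;> linarith
    · have b1 : (n:ℝ) - x.1 c ≤ dist x w₁ := by
        have h2 : w₁.1 c - x.1 c ≤ dist x w₁ :=
          le_trans (by rw [abs_sub_comm]; exact le_abs_self _) (kn_abs_le_dist x w₁ c)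
        rw [h₁off c hcp hcq] at h2
        linarith
      have b2 : (n:ℝ) - y.1 c ≤ dist y w₂ := by
        have h2 : w₂.1 c - y.1 c ≤ dist y w₂ :=
          le_trans (by rw [abs_sub_comm]; exact le_abs_self _) (kn_abs_le_dist y w₂ c)
        rw [h₂off c hcp hcq] at h2
        linarith
      have hxn : x.1 c ≤ n := kn_le x c
      have hyn : y.1 c ≤ n := kn_le y c
      rw [abs_sub_le_iff]
      constructor <;> linarith
  linarith

end Core

lemma knU_mem (n m : ℕ) (hn : 1 ≤ n) : KnU n m ∈ KnA n m := by
  left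
  refine ⟨Or.inl (KnU_p n m), fun c h1 _ => ?_⟩
  rw [KnU_off n m c h1]
  exact_mod_cast hn

lemma knV_mem (n m : ℕ) (hn : 1 ≤ n) : KnV n m ∈ KnA n m := by
  left
  refine ⟨Or.inl (KnV_p n m), fun c h1 h2 => ?_⟩
  rw [KnV_off n m c h1 h2]
  exact_mod_cast hn

lemma knU_ne_knV (n m : ℕ) (hn : 1 ≤ n) : KnU n m ≠ KnV n m := by
  intro h
  have h1 : (KnU n m).1 (2*m+1) = (KnV n m).1 (2*m+1) := by rw [h]
  rw [KnU_off n m _ (by omega), KnV_q n m hn] at h1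
  linarith

lemma kn_dist_uv (n m : ℕ) (hn : 1 ≤ n) : dist (KnU n m) (KnV n m) ≤ 1 := by
  refine kn_dist_le zero_le_one _ _ (fun c => ?_)
  by_cases hcp : c = 2*m
  · subst hcp; rw [KnU_p, KnV_p, sub_self, abs_zero]; norm_num
  by_cases hcq : c = 2*m+1
  · subst hcq
    rw [KnU_off n m _ (by omega), KnV_q n m hn]
    norm_num
  · rw [KnU_off n m _ hcp, KnV_off n m _ hcp hcq, sub_self, abs_zero]; norm_num

lemma kn_disjoint (n : ℕ) {m k : ℕ} (hmk : m ≠ k) : Disjoint (KnA n m) (KnA n k) := by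
  rw [Set.disjoint_left]
  intro x hm hk
  rcases hm with ⟨hz, _⟩ | ⟨hp1, hWm⟩
  · rcases hk with ⟨_, hoffk⟩ | ⟨_, hWk⟩
    · rcases hz with h | h
      · have := hoffk (2*m) (by omega) (by omega); rw [h] at this; linarith
      · have := hoffk (2*m+1) (by omega) (by omega); rw [h] at this; linarith
    · rcases hz with h | h
      · have := hWk (2*m) (by omega); rw [h] at this; linarith
      · have := hWk (2*m+1) (by omega); rw [h] at this; linarith
  · rcases hk with ⟨hz', _⟩ | ⟨_, hWk⟩
    · rcases hz' with h | h
      · have := hWm (2*k) (by omega); rw [h] at this; linarith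
      · have := hWm (2*k+1) (by omega); rw [h] at this; linarith
    · have := hWk (2*m) (by omega); rw [hp1] at this; linarith

/-- For every `n ≥ 1`, the metric space `Kn n` has the seq-SLTP. -/
theorem Kn_seqSLTP (n : ℕ) (hn : 1 ≤ n) : SeqSLTP (Kn n) := by
  intro ε hε
  refine ⟨fun m => KnA n m, fun m k hmk => kn_disjoint n hmk, fun m => ?_⟩
  have hn' : (1:ℝ) ≤ n := by exact_mod_cast hn
  -- marker coordinate facts
  have hup : (KnU n m).1 (2*m) = 0 := KnU_p n m
  have huoff : ∀ c, c ≠ 2*m → c ≠ 2*m+1 → (KnU n m).1 c = (n:ℝ) :=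
    fun c h1 _ => KnU_off n m c h1
  have huq : (n:ℝ) - 1 ≤ (KnU n m).1 (2*m+1) := by
    rw [KnU_off n m _ (by omega)]; linarith
  have hvp : (KnV n m).1 (2*m) = 0 := KnV_p n m
  have hvoff : ∀ c, c ≠ 2*m → c ≠ 2*m+1 → (KnV n m).1 c = (n:ℝ) :=
    fun c h1 h2 => KnV_off n m c h1 h2
  have hvq : (n:ℝ) - 1 ≤ (KnV n m).1 (2*m+1) := by rw [KnV_q n m hn]
  have hduv : dist (KnU n m) (KnV n m) ≤ 1 := kn_dist_uv n m hn
  refine ⟨KnU n m, knU_mem n m hn, KnV n m, knV_mem n m hn, knU_ne_knV n m hn, ?_, ?_⟩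
  · intro x hx y hy
    have hcore := kn_core (m := m) hn (KnU n m) (KnV n m) x y hup huoff hvp hvoff hvq huq
      (kn_outside hx) (kn_outside hy)
    have e1 : 0 ≤ ε * dist x y := by positivity
    have e2 : 0 ≤ ε * dist (KnU n m) (KnV n m) := by positivity
    nlinarith [dist_nonneg (x := x) (y := y), dist_nonneg (x := KnU n m) (y := KnV n m)]
  · intro x hx y hy z hz w hw
    have hc1 := kn_core (m := m) hn (KnU n m) (KnU n m) x y hup huoff hup huoff huq huq
      (kn_outside hx) (kn_outside hy)
    have hc2 := kn_core (m := m) hn (KnV n m) (KnV n m) z w hvp hvoff hvp hvoff hvq hvq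
      (kn_outside hz) (kn_outside hw)
    have e1 : 0 ≤ ε * dist x y := by positivity
    have e2 : 0 ≤ ε * dist z w := by positivity
    have e3 : 0 ≤ ε * dist (KnU n m) (KnV n m) := by positivity
    nlinarith [dist_nonneg (x := x) (y := y), dist_nonneg (x := z) (y := w),
      dist_nonneg (x := KnU n m) (y := KnV n m)]
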